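/- The subgroup Γ₀(N) of SL(4,ℤ), consisting of matrices whose first row is congruent to (*,0,0,0) modulo N, contains an element of order 5 if and only if 25 does not divide N and every prime divisor p of N with p ≠ 5 satisfies p ≡ 1 (mod 5). -/

import Mathlib

open Matrix Polynomial


lemma phi_matrix_zero (M : Matrix (Fin 4) (Fin 4) ℤ) (h5 : M ^ 5 = 1) (h1 : M ≠ 1) :
    1 + M + M^2 + M^3 + M^4 = 0 := by
  set φ : Matrix (Fin 4) (Fin 4) ℤ →+* Matrix (Fin 4) (Fin 4) ℚ :=
    (Int.castRingHom ℚ).mapMatrix with hφ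
  have hφinj : Function.Injective φ := by
    intro A B h
    ext i j
    have h2 : (A i j : ℚ) = (B i j : ℚ) := by
      have := congrFun (congrFun (congrArg Matrix.of.symm h) i) j
      simpa [hφ, RingHom.mapMatrix_apply, Matrix.map_apply] using
        congrFun (congrFun h i) j
    exact_mod_cast h2
  set A : Matrix (Fin 4) (Fin 4) ℚ := φ M with hA
  have hA5 : A ^ 5 = 1 := by rw [hA, ← map_pow, h5, _root_.map_one]
  have hA1 : A ≠ 1 := by
    intro h
    exact h1 (hφinj (h.trans (_root_.map_one φ).symm))
  have hint : IsIntegral ℚ A := ⟨A.charpoly, A.charpoly_monic, A.aeval_self_charpoly⟩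
  set m : ℚ[X] := minpoly ℚ A with hm
  set Φq : ℚ[X] := Polynomial.cyclotomic 5 ℚ with hΦdef
  have hΦ : Φq = X^4+X^3+X^2+X+1 := by
    haveI : Fact (Nat.Prime 5) := ⟨by norm_num⟩
    rw [hΦdef, Polynomial.cyclotomic_prime]
    simp [Finset.sum_range_succ]
    ring
  have hirr : Irreducible Φq := Polynomial.cyclotomic.irreducible_rat (by norm_num)
  have hfac : (X - 1) * Φq = X^5 - 1 := by rw [hΦ]; ring
  have hdvd1 : m ∣ (X - 1) * Φq := by
    apply minpoly.dvd
    rw [hfac]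
    simp [hA5]
  have hdvd2 : m ∣ A.charpoly := minpoly.dvd ℚ A A.aeval_self_charpoly
  have hm0 : m ≠ 0 := minpoly.ne_zero hint
  have hmmonic : m.Monic := minpoly.monic hint
  by_cases hc : Φq ∣ m
  · -- m = Φq
    have hcharm : A.charpoly.Monic := A.charpoly_monic
    have hdegchar : A.charpoly.natDegree = 4 := by
      rw [Matrix.charpoly_natDegree_eq_dim]
      simp
    have hdegm : m.natDegree ≤ 4 := by
      rw [← hdegchar]
      exact Polynomial.natDegree_le_of_dvd hdvd2 hcharm.ne_zero
    have hΦdeg : Φq.natDegree = 4 := by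
      rw [hΦ]
      compute_degree!
    obtain ⟨c, hcm⟩ := hc
    have hc0 : c ≠ 0 := by rintro rfl; rw [mul_zero] at hcm; exact hm0 hcm
    have hΦ0 : Φq ≠ 0 := hirr.ne_zero
    have hdegc : c.natDegree = 0 := by
      have := Polynomial.natDegree_mul hΦ0 hc0
      rw [← hcm] at this
      omega
    have hcC : c = Polynomial.C (c.coeff 0) := Polynomial.eq_C_of_natDegree_eq_zero hdegc
    have hΦmonic : Φq.Monic := by rw [hΦ]; monicity!
    have hlc : c.coeff 0 = 1 := by
      have := hmmonic
      rw [hcm, Polynomial.Monic, Polynomial.leadingCoeff_mul, hΦmonic.leadingCoeff,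
        one_mul] at this
      rw [hcC] at this ⊢
      simpa using this
    have hmeq : m = Φq := by rw [hcm, hcC, hlc]; simp
    have haev : Polynomial.aeval A Φq = 0 := by rw [← hmeq]; exact minpoly.aeval ℚ A
    rw [hΦ] at haev
    simp only [map_add, map_pow, Polynomial.aeval_X, Polynomial.aeval_one] at haev
    have goal' : φ (1 + M + M^2 + M^3 + M^4) = φ 0 := by
      simp only [map_add, map_pow, _root_.map_one, map_zero]
      rw [← hA]
      linear_combination (norm := abel) haev
    exact hφinj goal'
  · exfalso
    have hcop : IsCoprime m Φq := ((hirr.coprime_iff_not_dvd).2 hc).symm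
    have hdvdX : m ∣ X - 1 := hcop.dvd_of_dvd_mul_right hdvd1
    obtain ⟨c, hcm⟩ := hdvdX
    have : Polynomial.aeval A (X - 1 : ℚ[X]) = 0 := by
      rw [hcm, _root_.map_mul, minpoly.aeval, zero_mul]
    simp only [map_sub, Polynomial.aeval_X, _root_.map_one] at this
    exact hA1 (by linear_combination (norm := abel) this)


lemma row_pow {R : Type*} [CommRing R] (B : Matrix (Fin 4) (Fin 4) R)
    (hB : ∀ j : Fin 4, j ≠ 0 → B 0 j = 0) :
    ∀ k : ℕ, (∀ j : Fin 4, j ≠ 0 → (B^k) 0 j = 0) ∧ (B^k) 0 0 = (B 0 0)^k := by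
  intro k
  induction k with
  | zero => simp [Matrix.one_apply]; intro j hj; exact fun h => absurd h.symm hj
  | succ n ih =>
      have hmul : ∀ j, (B^(n+1)) 0 j = (B^n) 0 0 * B 0 j := by
        intro j
        rw [pow_succ, Matrix.mul_apply]
        rw [Finset.sum_eq_single 0]
        · intro l _ hl
          rw [ih.1 l hl, zero_mul]
        · intro h; simp at h
      constructor
      · intro j hj
        rw [hmul j, hB j hj, mul_zero]
      · rw [hmul 0, ih.2, pow_succ]

lemma no_root_25 : ∀ x : ZMod 25, x^4+x^3+x^2+x+1 ≠ 0 := by decide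

lemma forward_dvd (N : ℕ) (M : Matrix (Fin 4) (Fin 4) ℤ)
    (hrow : ∀ j : Fin 4, j ≠ 0 → (N : ℤ) ∣ M 0 j)
    (hphi : 1 + M + M^2 + M^3 + M^4 = 0) :
    (N : ℤ) ∣ (M 0 0)^4 + (M 0 0)^3 + (M 0 0)^2 + M 0 0 + 1 := by
  set ψ : Matrix (Fin 4) (Fin 4) ℤ →+* Matrix (Fin 4) (Fin 4) (ZMod N) :=
    (Int.castRingHom (ZMod N)).mapMatrix with hψ
  set B : Matrix (Fin 4) (Fin 4) (ZMod N) := ψ M with hBdef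
  have hBrow : ∀ j : Fin 4, j ≠ 0 → B 0 j = 0 := by
    intro j hj
    have : ((M 0 j : ℤ) : ZMod N) = 0 := (ZMod.intCast_zmod_eq_zero_iff_dvd _ N).2 (hrow j hj)
    simpa [hBdef, hψ, RingHom.mapMatrix_apply, Matrix.map_apply] using this
  have hphiB : 1 + B + B^2 + B^3 + B^4 = 0 := by
    have := congrArg ψ hphi
    rw [hBdef]
    simpa only [map_add, map_pow, _root_.map_one, map_zero] using this
  set b : ZMod N := B 0 0 with hb
  have h2 := (row_pow B hBrow 2).2
  have h3 := (row_pow B hBrow 3).2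
  have h4 := (row_pow B hBrow 4).2
  have hentry := congrFun (congrFun hphiB 0) 0
  simp only [Matrix.add_apply, Matrix.one_apply_eq, Matrix.zero_apply, h2, h3, h4] at hentry
  have hzero : (1 : ZMod N) + b + b^2 + b^3 + b^4 = 0 := by
    rw [hb]; exact hentry
  have hbcast : b = ((M 0 0 : ℤ) : ZMod N) := by
    simp [hb, hBdef, hψ, RingHom.mapMatrix_apply, Matrix.map_apply]
  rw [← ZMod.intCast_zmod_eq_zero_iff_dvd]
  push_cast
  rw [← hbcast]
  linear_combination hzero

lemma cond_of_dvd (N : ℕ) (a : ℤ) (h : (N : ℤ) ∣ a^4+a^3+a^2+a+1) :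
    ¬ (25 ∣ N) ∧ ∀ p : ℕ, p.Prime → p ∣ N → p ≠ 5 → p % 5 = 1 := by
  constructor
  · intro h25
    have hdvd : ((25:ℕ) : ℤ) ∣ a^4+a^3+a^2+a+1 := dvd_trans (by exact_mod_cast Int.natCast_dvd_natCast.2 h25) h
    have : ((a^4+a^3+a^2+a+1 : ℤ) : ZMod 25) = 0 := (ZMod.intCast_zmod_eq_zero_iff_dvd _ 25).2 hdvd
    push_cast at this
    exact no_root_25 ((a : ZMod 25)) this
  · intro p hp hpN hp5
    haveI : Fact p.Prime := ⟨hp⟩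
    have hdvd : ((p:ℕ) : ℤ) ∣ a^4+a^3+a^2+a+1 := dvd_trans (Int.natCast_dvd_natCast.2 hpN) h
    have hx0 : ((a : ZMod p))^4 + (a : ZMod p)^3 + (a : ZMod p)^2 + (a : ZMod p) + 1 = 0 := by
      have : ((a^4+a^3+a^2+a+1 : ℤ) : ZMod p) = 0 := (ZMod.intCast_zmod_eq_zero_iff_dvd _ p).2 hdvd
      push_cast at this
      exact this
    set x : ZMod p := (a : ZMod p) with hx
    have hx5 : x^5 = 1 := by
      have : x^5 - 1 = (x - 1) * (x^4+x^3+x^2+x+1) := by ring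
      rw [hx0, mul_zero, sub_eq_zero] at this
      exact this
    have hxne1 : x ≠ 1 := by
      intro h1
      rw [h1] at hx0
      norm_num at hx0
      have : ((5:ℕ) : ZMod p) = 0 := by exact_mod_cast hx0
      rw [ZMod.natCast_eq_zero_iff] at this
      exact hp5 ((Nat.prime_dvd_prime_iff_eq hp (by norm_num)).1 this)
    have hxne0 : x ≠ 0 := by
      intro h0; rw [h0] at hx5; simp at hx5
    set u : (ZMod p)ˣ := Units.mk0 x hxne0 with hu
    have hu5 : u ^ 5 = 1 := by
      ext
      push_cast [hu]
      exact hx5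
    have hune : u ≠ 1 := by
      intro h1
      apply hxne1
      have := congrArg Units.val h1
      simpa [hu] using this
    have hord : orderOf u = 5 := by
      have hdvd5 : orderOf u ∣ 5 := orderOf_dvd_of_pow_eq_one hu5
      rcases (Nat.Prime.eq_one_or_self_of_dvd (by norm_num) _ hdvd5) with h' | h'
      · exact absurd (orderOf_eq_one_iff.1 h') hune
      · exact h'
    have hcard : orderOf u ∣ p - 1 := by
      rw [← ZMod.card_units p]
      exact orderOf_dvd_card
    rw [hord] at hcard
    have := hp.two_le
    omega


lemma root_mod_prime (p : ℕ) (hp : p.Prime) (h1 : p % 5 = 1) :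
    ∃ a : ℤ, (p:ℤ) ∣ a^4+a^3+a^2+a+1 := by
  haveI : Fact p.Prime := ⟨hp⟩
  haveI : Fact (Nat.Prime 5) := ⟨by norm_num⟩
  have hcard : Fintype.card (ZMod p)ˣ = p - 1 := ZMod.card_units p
  have h5 : 5 ∣ Fintype.card (ZMod p)ˣ := by
    rw [hcard]
    have := hp.two_le
    omega
  obtain ⟨u, hu⟩ := exists_prime_orderOf_dvd_card 5 h5
  have hu5 : u ^ 5 = 1 := by rw [← hu]; exact pow_orderOf_eq_one u
  have hune : u ≠ 1 := by
    intro h; rw [h, orderOf_one] at hu; norm_num at hu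
  set z : ZMod p := (u : ZMod p) with hz
  have hz5 : z ^ 5 = 1 := by
    have := congrArg (Units.val) hu5
    push_cast at this
    exact this
  have hzne : z ≠ 1 := by
    intro h
    exact hune (Units.ext h)
  have hroot : z^4+z^3+z^2+z+1 = 0 := by
    have h : (z - 1) * (z^4+z^3+z^2+z+1) = 0 := by
      have : (z - 1) * (z^4+z^3+z^2+z+1) = z^5 - 1 := by ring
      rw [this, hz5, sub_self]
    rcases mul_eq_zero.1 h with h' | h'
    · exact absurd (sub_eq_zero.1 h') hzne
    · exact h'
  refine ⟨(z.val : ℤ), ?_⟩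
  rw [← ZMod.intCast_zmod_eq_zero_iff_dvd]
  push_cast
  rw [ZMod.natCast_val, ZMod.cast_id]
  exact hroot

lemma root_lift (p : ℕ) (hp : p.Prime) (h1 : p % 5 = 1) (n : ℕ) (hn : 1 ≤ n) (a : ℤ)
    (ha : (p:ℤ)^n ∣ a^4+a^3+a^2+a+1) :
    ∃ b : ℤ, (p:ℤ)^(n+1) ∣ b^4+b^3+b^2+b+1 := by
  haveI : Fact p.Prime := ⟨hp⟩
  obtain ⟨k, hk⟩ := ha
  have hpn : (p:ℤ) ∣ a^4+a^3+a^2+a+1 :=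
    dvd_trans (dvd_pow_self (p:ℤ) (by omega : n ≠ 0)) ⟨k, hk⟩
  set x : ZMod p := (a : ZMod p) with hxdef
  have hx0 : x^4+x^3+x^2+x+1 = 0 := by
    have := (ZMod.intCast_zmod_eq_zero_iff_dvd _ p).2 hpn
    push_cast at this
    exact this
  have hx5 : x^5 = 1 := by
    have : x^5 - 1 = (x - 1) * (x^4+x^3+x^2+x+1) := by ring
    rw [hx0, mul_zero, sub_eq_zero] at this
    exact this
  have hxne : x ≠ 0 := by
    intro h; rw [h] at hx5; simp at hx5
  have h5ne : (5 : ZMod p) ≠ 0 := by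
    have : ((5:ℕ) : ZMod p) ≠ 0 := by
      rw [Ne, ZMod.natCast_eq_zero_iff]
      intro hdvd
      have := (Nat.prime_dvd_prime_iff_eq hp (by norm_num)).1 hdvd
      omega
    exact_mod_cast this
  set d : ZMod p := 4*x^3+3*x^2+2*x+1 with hddef
  have hdkey : (x - 1) * d = 5*x^4 := by
    have : (x - 1) * d = 5*x^4 - (x^4+x^3+x^2+x+1) := by rw [hddef]; ring
    rw [hx0, sub_zero] at this
    exact this
  have hdne : d ≠ 0 := by
    intro h
    rw [h, mul_zero] at hdkey
    exact (mul_ne_zero h5ne (pow_ne_zero 4 hxne)) hdkey.symm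
  set τ : ZMod p := -(k : ZMod p) * d⁻¹ with hτdef
  set t : ℤ := (τ.val : ℤ) with htdef
  have hτcast : (t : ZMod p) = τ := by
    rw [htdef]; push_cast; rw [ZMod.natCast_val, ZMod.cast_id]
  have hkey : (p:ℤ) ∣ k + (4*a^3+3*a^2+2*a+1) * t := by
    rw [← ZMod.intCast_zmod_eq_zero_iff_dvd]
    push_cast
    rw [hτcast, hτdef, ← hxdef]
    have : (k:ZMod p) + (4*x^3+3*x^2+2*x+1) * (-(k:ZMod p) * d⁻¹)
        = (k:ZMod p) - (k:ZMod p) * (d * d⁻¹) := by rw [hddef]; ring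
    rw [this, mul_inv_cancel₀ hdne, mul_one, sub_self]
  refine ⟨a + (p:ℤ)^n * t, ?_⟩
  have expand : (a + (p:ℤ)^n * t)^4 + (a + (p:ℤ)^n * t)^3 + (a + (p:ℤ)^n * t)^2
      + (a + (p:ℤ)^n * t) + 1
      = (p:ℤ)^n * (k + (4*a^3+3*a^2+2*a+1) * t)
        + ((p:ℤ)^n)^2 * (t^2*(6*a^2+3*a+1) + (p:ℤ)^n*t^3*(4*a+1) + ((p:ℤ)^n)^2*t^4) := by
    linear_combination hk
  rw [expand]
  apply dvd_add
  · rw [pow_succ]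
    exact mul_dvd_mul_left _ hkey
  · exact dvd_mul_of_dvd_left (by rw [← pow_mul]; exact pow_dvd_pow _ (by omega)) _

lemma root_mod_prime_pow (p : ℕ) (hp : p.Prime) (h1 : p % 5 = 1) (n : ℕ) (hn : 0 < n) :
    ∃ a : ℤ, ((p^n : ℕ) : ℤ) ∣ a^4+a^3+a^2+a+1 := by
  induction n with
  | zero => omega
  | succ m ih =>
      rcases Nat.eq_zero_or_pos m with hm | hm
      · subst hm
        obtain ⟨a, ha⟩ := root_mod_prime p hp h1
        exact ⟨a, by push_cast; simpa using ha⟩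
      · obtain ⟨a, ha⟩ := ih hm
        obtain ⟨b, hb⟩ := root_lift p hp h1 m hm a (by push_cast at ha ⊢; exact ha)
        exact ⟨b, by push_cast; exact hb⟩

lemma exists_root (N : ℕ) (h25 : ¬ (25 ∣ N))
    (hp : ∀ p : ℕ, p.Prime → p ∣ N → p ≠ 5 → p % 5 = 1) :
    ∃ a : ℤ, (N : ℤ) ∣ a^4+a^3+a^2+a+1 := by
  induction N using Nat.recOnPosPrimePosCoprime with
  | prime_pow p n hprime hn =>
      by_cases hp5 : p = 5
      · subst hp5
        rcases Nat.lt_or_ge n 2 with h2 | h2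
        · have hn1 : n = 1 := by omega
          subst hn1
          exact ⟨1, by norm_num⟩
        · exfalso
          apply h25
          calc (25 : ℕ) = 5^2 := by norm_num
            _ ∣ 5^n := pow_dvd_pow 5 h2
      · exact root_mod_prime_pow p hprime
          (hp p hprime (dvd_pow_self p (by omega : n ≠ 0)) hp5) n hn
  | zero => exact absurd (dvd_zero 25) h25
  | one => exact ⟨0, by norm_num⟩
  | coprime a b ha hb hab iha ihb =>
      obtain ⟨x, hx⟩ := iha (fun h => h25 (h.mul_right b))
        (fun p hp' hd hne => hp p hp' (hd.mul_right b) hne)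
      obtain ⟨y, hy⟩ := ihb (fun h => h25 (h.mul_left a))
        (fun p hp' hd hne => hp p hp' (hd.mul_left a) hne)
      have hco : IsCoprime (a:ℤ) (b:ℤ) := Int.isCoprime_iff_gcd_eq_one.2 (by exact_mod_cast hab)
      obtain ⟨u, v, huv⟩ := hco
      set z : ℤ := y*(u*a) + x*(v*b) with hz
      have hdx : (a:ℤ) ∣ z - x := by
        have : z - x = (y - x)*(u*a) := by
          have hx1 : x = x * (u*a + v*b) := by rw [huv]; ring
          calc z - x = y*(u*a) + x*(v*b) - x := by rw [hz]
            _ = y*(u*a) + x*(v*b) - x*(u*a + v*b) := by rw [← hx1]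
            _ = (y - x)*(u*a) := by ring
        rw [this]
        exact Dvd.dvd.mul_left (dvd_mul_left _ _) _
      have hdy : (b:ℤ) ∣ z - y := by
        have : z - y = (x - y)*(v*b) := by
          have hy1 : y = y * (u*a + v*b) := by rw [huv]; ring
          calc z - y = y*(u*a) + x*(v*b) - y := by rw [hz]
            _ = y*(u*a) + x*(v*b) - y*(u*a + v*b) := by rw [← hy1]
            _ = (x - y)*(v*b) := by ring
        rw [this]
        exact Dvd.dvd.mul_left (dvd_mul_left _ _) _
      have key : ∀ (w r : ℤ), w - r ∣ (w^4+w^3+w^2+w+1) - (r^4+r^3+r^2+r+1) :=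
        fun w r => ⟨w^3+w^2*r+w*r^2+r^3 + w^2+w*r+r^2 + w+r+1, by ring⟩
      have hza : (a:ℤ) ∣ z^4+z^3+z^2+z+1 := by
        have h1 := hdx.trans (key z x)
        have h2 := dvd_add h1 hx
        have h3 : z^4+z^3+z^2+z+1 - (x^4+x^3+x^2+x+1) + (x^4+x^3+x^2+x+1)
            = z^4+z^3+z^2+z+1 := by ring
        rwa [h3] at h2
      have hzb : (b:ℤ) ∣ z^4+z^3+z^2+z+1 := by
        have h1 := hdy.trans (key z y)
        have h2 := dvd_add h1 hy
        have h3 : z^4+z^3+z^2+z+1 - (y^4+y^3+y^2+y+1) + (y^4+y^3+y^2+y+1)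
            = z^4+z^3+z^2+z+1 := by ring
        rwa [h3] at h2
      have hco2 : IsCoprime (a:ℤ) (b:ℤ) := ⟨u, v, huv⟩
      exact ⟨z, by push_cast; exact hco2.mul_dvd hza hzb⟩

def Zm : Matrix (Fin 4) (Fin 4) ℤ := !![0,0,0,-1; 1,0,0,-1; 0,1,0,-1; 0,0,1,-1]
def Um (a : ℤ) : Matrix (Fin 4) (Fin 4) ℤ := !![1,a,a^2,a^3; 0,1,0,0; 0,0,1,0; 0,0,0,1]
def Vm (a : ℤ) : Matrix (Fin 4) (Fin 4) ℤ := !![1,-a,-(a^2),-(a^3); 0,1,0,0; 0,0,1,0; 0,0,0,1]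
def Wm (a : ℤ) : Matrix (Fin 4) (Fin 4) ℤ :=
  !![a, a^2, a^3, -(1+a+a^2+a^3);
     1, 0, 0, -1;
     0, 1, 0, -1;
     0, 0, 1, -1]
def Gm (a : ℤ) : Matrix (Fin 4) (Fin 4) ℤ :=
  !![a, 0, 0, -(a^4+a^3+a^2+a+1);
     1, -a, -(a^2), -(1+a^3);
     0, 1, 0, -1;
     0, 0, 1, -1]

lemma UZ (a : ℤ) : Um a * Zm = Wm a := by
  ext i j
  fin_cases i <;> fin_cases j <;>
    simp [Um, Zm, Wm, Matrix.mul_apply, Fin.sum_univ_four, Matrix.vecHead, Matrix.vecTail,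
      Function.comp] <;> ring

lemma WV (a : ℤ) : Wm a * Vm a = Gm a := by
  ext i j
  fin_cases i <;> fin_cases j <;>
    simp [Wm, Vm, Gm, Matrix.mul_apply, Fin.sum_univ_four, Matrix.vecHead, Matrix.vecTail,
      Function.comp] <;> ring

lemma Zm5 : Zm ^ 5 = 1 := by decide

lemma UV (a : ℤ) : Um a * Vm a = 1 := by
  ext i j
  fin_cases i <;> fin_cases j <;>
    simp [Um, Vm, Matrix.mul_apply, Fin.sum_univ_four, Matrix.vecHead, Matrix.vecTail,
      Function.comp]

lemma VU (a : ℤ) : Vm a * Um a = 1 := by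
  ext i j
  fin_cases i <;> fin_cases j <;>
    simp [Um, Vm, Matrix.mul_apply, Fin.sum_univ_four, Matrix.vecHead, Matrix.vecTail,
      Function.comp]

lemma Gm_eq (a : ℤ) : Gm a = Um a * Zm * Vm a := by rw [UZ, WV]

lemma Gm5 (a : ℤ) : Gm a ^ 5 = 1 := by
  have h : ∀ n : ℕ, Gm a ^ (n+1) = Um a * Zm ^ (n+1) * Vm a := by
    intro n
    induction n with
    | zero => simpa [pow_one] using Gm_eq a
    | succ n ih =>
        rw [pow_succ, ih, Gm_eq a, pow_succ]
        calc Um a * Zm ^ (n + 1) * Vm a * (Um a * Zm * Vm a)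
            = Um a * Zm ^ (n + 1) * (Vm a * Um a) * Zm * Vm a := by
              simp only [Matrix.mul_assoc]
          _ = Um a * (Zm ^ (n + 1) * Zm) * Vm a := by
              rw [VU]; simp only [Matrix.mul_assoc, Matrix.one_mul, Matrix.mul_one]
  rw [show (5:ℕ) = 4+1 from rfl, h, Zm5]
  simpa using UV a

lemma Gm_det (a : ℤ) : (Gm a).det = 1 := by
  have hU : (Um a).det = 1 := by
    simp [Um, Matrix.det_succ_row_zero, Fin.sum_univ_succ, Matrix.vecHead, Matrix.vecTail]
  have hV : (Vm a).det = 1 := by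
    simp [Vm, Matrix.det_succ_row_zero, Fin.sum_univ_succ, Matrix.vecHead, Matrix.vecTail]
  have hZ : Zm.det = 1 := by decide
  rw [Gm_eq, det_mul, det_mul, hU, hV, hZ]; ring

def gEl (a : ℤ) : Matrix.SpecialLinearGroup (Fin 4) ℤ := ⟨Gm a, Gm_det a⟩

lemma gEl5 (a : ℤ) : gEl a ^ 5 = 1 := by
  have h : ((gEl a ^ 5 : Matrix.SpecialLinearGroup (Fin 4) ℤ) : Matrix (Fin 4) (Fin 4) ℤ)
      = ((1 : Matrix.SpecialLinearGroup (Fin 4) ℤ) : Matrix (Fin 4) (Fin 4) ℤ) := by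
    rw [Matrix.SpecialLinearGroup.coe_pow]
    exact (Gm5 a).trans Matrix.SpecialLinearGroup.coe_one.symm
  exact Subtype.coe_injective h

lemma gEl_ne_one (a : ℤ) : gEl a ≠ 1 := by
  intro h
  have h2 : Gm a 1 0 = (1 : Matrix (Fin 4) (Fin 4) ℤ) 1 0 := by
    rw [show Gm a = ((1 : Matrix.SpecialLinearGroup (Fin 4) ℤ) : Matrix (Fin 4) (Fin 4) ℤ) from by
      rw [← h]; rfl]
    rfl
  simp [Gm, Matrix.one_apply] at h2

lemma gEl_row (a : ℤ) (N : ℕ) (hd : (N:ℤ) ∣ a^4+a^3+a^2+a+1) :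
    ∀ j : Fin 4, j ≠ 0 → (N : ℤ) ∣ (gEl a : Matrix (Fin 4) (Fin 4) ℤ) 0 j := by
  intro j hj
  fin_cases j
  · exact absurd rfl hj
  · simp [gEl, Gm]
  · simp [gEl, Gm]
  · simp only [gEl, Gm]
    show (N:ℤ) ∣ !![a, 0, 0, -(a^4+a^3+a^2+a+1); 1, -a, -(a^2), -(1+a^3); 0,1,0,-1; 0,0,1,-1] 0 3
    simpa using hd.neg_right


/-- The matrix `Z`, companion matrix of `x⁴+x³+x²+x+1`. -/
theorem gamma0_SL4_has_order_five_element_iff (N : ℕ) (hN : 1 ≤ N) :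
    (∃ g : Matrix.SpecialLinearGroup (Fin 4) ℤ,
      (∀ j : Fin 4, j ≠ 0 → (N : ℤ) ∣ (g : Matrix (Fin 4) (Fin 4) ℤ) 0 j) ∧
      g ^ 5 = 1 ∧ g ≠ 1) ↔
    ¬ (25 ∣ N) ∧ ∀ p : ℕ, p.Prime → p ∣ N → p ≠ 5 → p % 5 = 1 := by
  constructor
  · rintro ⟨g, hrow, h5, h1⟩
    set M : Matrix (Fin 4) (Fin 4) ℤ := (g : Matrix (Fin 4) (Fin 4) ℤ) with hM
    have hM5 : M ^ 5 = 1 := by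
      rw [hM, ← Matrix.SpecialLinearGroup.coe_pow, h5]
      exact Matrix.SpecialLinearGroup.coe_one
    have hM1 : M ≠ 1 := by
      intro h
      apply h1
      apply Subtype.coe_injective
      show (g : Matrix (Fin 4) (Fin 4) ℤ)
          = ((1 : Matrix.SpecialLinearGroup (Fin 4) ℤ) : Matrix (Fin 4) (Fin 4) ℤ)
      rw [Matrix.SpecialLinearGroup.coe_one, ← hM]
      exact h
    exact cond_of_dvd N (M 0 0) (forward_dvd N M hrow (phi_matrix_zero M hM5 hM1))
  · rintro ⟨h25, hp⟩
    obtain ⟨a, ha⟩ := exists_root N h25 hp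
    exact ⟨gEl a, gEl_row a N ha, gEl5 a, gEl_ne_one a⟩
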